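/- Let p be a real polynomial of even degree n ≥ 2 such that p has no real zeros, p'' has no real zeros, and p' has exactly one real zero p₀, which is simple. Let K(x) = p'(x)²/(p''(x)·p(x)). Suppose K has a local extremum at some real point other than p₀, and every real point b at which K has a local maximum satisfies K(b) < n/(n−1). Then the polynomial Δ(x) = (n−1)·p'(x)² − n·p(x)·p''(x) has no real zeros. -/

import Mathlib

open Polynomial Filter Topology

private lemma exists_isLocalMax_of_tendsto (f : ℝ → ℝ) (hf : Continuous f) (S : ℝ)
    (ht : Tendsto f atTop (𝓝 S)) (hb : Tendsto f atBot (𝓝 S))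
    (x₀ : ℝ) (hx : f x₀ = S) : ∃ b, IsLocalMax f b ∧ S ≤ f b := by
  by_cases hle : ∀ y, f y ≤ S
  · exact ⟨x₀, Filter.Eventually.of_forall (fun y => by rw [hx]; exact hle y), hx.ge⟩
  · push_neg at hle
    obtain ⟨y, hy⟩ := hle
    obtain ⟨A, hA⟩ := (ht.eventually_lt_const hy).exists_forall_of_atTop
    obtain ⟨B, hB⟩ := (hb.eventually_lt_const hy).exists_forall_of_atBot
    have hyI : y ∈ Set.Icc (min B y) (max A y) := ⟨min_le_right _ _, le_max_right _ _⟩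
    obtain ⟨c, hcI, hc⟩ := isCompact_Icc.exists_isMaxOn ⟨y, hyI⟩ hf.continuousOn
    have hyc : f y ≤ f c := hc hyI
    have hglob : ∀ z, f z ≤ f c := by
      intro z
      by_cases hz : z ∈ Set.Icc (min B y) (max A y)
      · exact hc hz
      · simp only [Set.mem_Icc, not_and_or, not_le] at hz
        rcases hz with hz | hz
        · exact le_of_lt (lt_of_lt_of_le (hB z (hz.le.trans (min_le_left _ _))) hyc)
        · exact le_of_lt (lt_of_lt_of_le (hA z ((le_max_left A y).trans hz.le)) hyc)
    exact ⟨c, Filter.Eventually.of_forall hglob, le_of_lt (lt_of_lt_of_le hy hyc)⟩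

/-- if the gain K has a local extremum away from p₀ and every local
maximum value of K is less than n/(n−1), then Δ has no real zeros. -/
theorem small_maxima_no_real_zero (p : Polynomial ℝ)
    (hdeg : 2 ≤ p.natDegree) (heven : Even p.natDegree)
    (hp : ∀ x : ℝ, p.eval x ≠ 0)
    (hp'' : ∀ x : ℝ, (derivative (derivative p)).eval x ≠ 0)
    (p₀ : ℝ) (hp₀ : (derivative p).eval p₀ = 0)
    (huniq : ∀ x : ℝ, (derivative p).eval x = 0 → x = p₀)
    (hsimple : Polynomial.rootMultiplicity p₀ (derivative p) = 1)
    (hext : ∃ b : ℝ, b ≠ p₀ ∧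
      IsLocalExtr (fun y : ℝ => ((derivative p).eval y) ^ 2 /
        (((derivative (derivative p)).eval y) * p.eval y)) b)
    (hmax : ∀ b : ℝ,
      IsLocalMax (fun y : ℝ => ((derivative p).eval y) ^ 2 /
        (((derivative (derivative p)).eval y) * p.eval y)) b →
      ((derivative p).eval b) ^ 2 / (((derivative (derivative p)).eval b) * p.eval b) <
        (p.natDegree : ℝ) / ((p.natDegree : ℝ) - 1)) :
    ∀ x : ℝ,
      (Polynomial.C ((p.natDegree : ℝ) - 1) * (derivative p) ^ 2 -
        Polynomial.C (p.natDegree : ℝ) * p * derivative (derivative p)).eval x ≠ 0 := by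
  intro x hx
  set n := p.natDegree with hn
  simp only [eval_sub, eval_mul, eval_pow, eval_C] at hx
  set S : ℝ := (n : ℝ) / ((n : ℝ) - 1) with hSdef
  -- basic nonvanishing facts
  have hpne : p ≠ 0 := fun h => hp 0 (by simp [h])
  have hq2ne : derivative (derivative p) ≠ 0 := fun h => hp'' 0 (by simp [h])
  have hq1ne : derivative p ≠ 0 := fun h => hq2ne (by simp [h])
  have ha : p.leadingCoeff ≠ 0 := leadingCoeff_ne_zero.mpr hpne
  have hnR : (2 : ℝ) ≤ (n : ℝ) := by exact_mod_cast hdeg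
  have hn1 : (n : ℝ) - 1 ≠ 0 := by linarith
  have hnne : (n : ℝ) ≠ 0 := by linarith
  -- degrees of derivatives
  have hd1 : (derivative p).natDegree = n - 1 := by
    have h := degree_derivative_eq p (by omega)
    exact natDegree_eq_of_degree_eq_some (by rw [h])
  have hd2 : (derivative (derivative p)).natDegree = n - 2 := by
    have h := degree_derivative_eq (derivative p) (by omega)
    have h2 := natDegree_eq_of_degree_eq_some h
    rw [hd1] at h2
    omega
  -- leading coefficients
  have hcast1 : ((n - 1 : ℕ) : ℝ) = (n : ℝ) - 1 := by
    have := Nat.cast_sub (R := ℝ) (by omega : 1 ≤ n); simpa using this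
  have hcast2 : ((n - 2 : ℕ) : ℝ) = (n : ℝ) - 2 := by
    have := Nat.cast_sub (R := ℝ) (by omega : 2 ≤ n); simpa using this
  have hl1 : (derivative p).leadingCoeff = p.leadingCoeff * n := by
    rw [Polynomial.leadingCoeff, hd1, coeff_derivative,
      Nat.sub_add_cancel (by omega : 1 ≤ n), hcast1, coeff_natDegree]
    ring
  have hl2 : (derivative (derivative p)).leadingCoeff = p.leadingCoeff * n * ((n : ℝ) - 1) := by
    rw [Polynomial.leadingCoeff, hd2, coeff_derivative,
      (by omega : n - 2 + 1 = n - 1), hcast2, ← hd1, coeff_natDegree, hl1]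
    ring
  -- the numerator and denominator polynomials of K
  set P : ℝ[X] := (derivative p) ^ 2 with hPdef
  set Q : ℝ[X] := derivative (derivative p) * p with hQdef
  have hPne : P ≠ 0 := pow_ne_zero _ hq1ne
  have hQne : Q ≠ 0 := mul_ne_zero hq2ne hpne
  have hdP : P.natDegree = 2 * (n - 1) := by
    rw [hPdef, natDegree_pow, hd1]
  have hdQ : Q.natDegree = (n - 2) + n := by
    rw [hQdef, natDegree_mul hq2ne hpne, hd2]
  have hdegeq : P.degree = Q.degree := by
    rw [degree_eq_natDegree hPne, degree_eq_natDegree hQne, hdP, hdQ]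
    norm_cast; omega
  have hratio : P.leadingCoeff / Q.leadingCoeff = S := by
    rw [hPdef, hQdef, leadingCoeff_pow, leadingCoeff_mul, hl1, hl2, hSdef]
    field_simp
  -- limit of K at +∞
  have htop0 := div_tendsto_leadingCoeff_div_of_degree_eq P Q hdegeq
  rw [hratio] at htop0
  -- limit of K at −∞, via composition with negation
  set P' : ℝ[X] := P.comp (-X) with hP'def
  set Q' : ℝ[X] := Q.comp (-X) with hQ'def
  have hXd : (-X : ℝ[X]).natDegree = 1 := by simp
  have hXlc : (-X : ℝ[X]).leadingCoeff = -1 := by simp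
  have hlcP' : P'.leadingCoeff = P.leadingCoeff := by
    rw [hP'def, leadingCoeff_comp (by rw [hXd]; omega), hXlc, hdP,
      Even.neg_one_pow ⟨n - 1, by omega⟩, mul_one]
  have hlcQ' : Q'.leadingCoeff = Q.leadingCoeff := by
    rw [hQ'def, leadingCoeff_comp (by rw [hXd]; omega), hXlc, hdQ,
      Even.neg_one_pow ⟨n - 1, by omega⟩, mul_one]
  have hP'ne : P' ≠ 0 := by
    intro h
    exact hPne (leadingCoeff_eq_zero.mp (by rw [← hlcP', h, leadingCoeff_zero]))
  have hQ'ne : Q' ≠ 0 := by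
    intro h
    exact hQne (leadingCoeff_eq_zero.mp (by rw [← hlcQ', h, leadingCoeff_zero]))
  have hdegeq' : P'.degree = Q'.degree := by
    rw [degree_eq_natDegree hP'ne, degree_eq_natDegree hQ'ne, hP'def, hQ'def,
      natDegree_comp, natDegree_comp, hXd, hdP, hdQ]
    norm_cast; omega
  have hratio' : P'.leadingCoeff / Q'.leadingCoeff = S := by
    rw [hlcP', hlcQ', hratio]
  have hbot1 := div_tendsto_leadingCoeff_div_of_degree_eq P' Q' hdegeq'
  rw [hratio'] at hbot1
  have hbot0 : Tendsto (fun y : ℝ => P.eval y / Q.eval y) atBot (𝓝 S) := by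
    refine (hbot1.comp tendsto_neg_atBot_atTop).congr ?_
    intro z
    simp [hP'def, hQ'def, eval_comp, Function.comp]
  -- rephrase as the explicit function K
  set K : ℝ → ℝ := fun y : ℝ => ((derivative p).eval y) ^ 2 /
      (((derivative (derivative p)).eval y) * p.eval y) with hKdef
  have hKeq : ∀ y, P.eval y / Q.eval y = K y := by
    intro y; simp [hPdef, hQdef, hKdef]
  have htop : Tendsto K atTop (𝓝 S) := htop0.congr hKeq
  have hbot : Tendsto K atBot (𝓝 S) := hbot0.congr hKeq
  have hKcont : Continuous K := by
    apply Continuous.div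
    · exact (Polynomial.continuous (derivative p)).pow 2
    · exact (Polynomial.continuous (derivative (derivative p))).mul (Polynomial.continuous p)
    · intro y; exact mul_ne_zero (hp'' y) (hp y)
  -- from the zero of Δ, the value of K is exactly S
  have hKx : K x = S := by
    show eval x (derivative p) ^ 2 / (eval x (derivative (derivative p)) * eval x p) =
      (n : ℝ) / ((n : ℝ) - 1)
    rw [div_eq_div_iff (mul_ne_zero (hp'' x) (hp x)) hn1]
    linear_combination hx
  obtain ⟨b, hb, hSb⟩ := exists_isLocalMax_of_tendsto K hKcont S htop hbot x hKx
  have h1 := hmax b hb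
  have h2 : S ≤ eval b (derivative p) ^ 2 /
      (eval b (derivative (derivative p)) * eval b p) := hSb
  linarith
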